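/- For the SGPO dynamics initialized at pS_0 = qS_0 = 1/2, one has pS_k > qS_k for every k ≥ 1. -/

import Mathlib

noncomputable def f11 (p : ℝ) : ℝ :=
  Real.log p + p * (1 - p) - Real.log (1 - p + p * Real.exp (p * (1 - p)))

noncomputable def f12 (p q : ℝ) : ℝ :=
  Real.log q + p ^ 2 * q * (1 - q) - Real.log (1 - q + q * Real.exp (p ^ 2 * q * (1 - q)))

noncomputable def sgpoG (t q : ℝ) : ℝ := q * Real.exp t / (1 - q + q * Real.exp t)

lemma sgpo_den_pos {t q : ℝ} (hq0 : 0 < q) (hq1 : q < 1) :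
    0 < 1 - q + q * Real.exp t := by
  have := mul_pos hq0 (Real.exp_pos t)
  linarith

lemma exp_f12_eq {p q : ℝ} (hq0 : 0 < q) (hq1 : q < 1) :
    Real.exp (f12 p q) = sgpoG (p ^ 2 * q * (1 - q)) q := by
  unfold f12 sgpoG
  have hd : 0 < 1 - q + q * Real.exp (p ^ 2 * q * (1 - q)) := sgpo_den_pos hq0 hq1
  rw [Real.exp_sub, Real.exp_add, Real.exp_log hq0, Real.exp_log hd]

lemma f11_eq_f12 (p : ℝ) : f11 p = f12 1 p := by
  simp [f11, f12]

lemma exp_f11_eq {p : ℝ} (hp0 : 0 < p) (hp1 : p < 1) :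
    Real.exp (f11 p) = sgpoG (p * (1 - p)) p := by
  rw [f11_eq_f12, exp_f12_eq hp0 hp1]
  norm_num

lemma sgpoG_pos {t q : ℝ} (hq0 : 0 < q) (hq1 : q < 1) : 0 < sgpoG t q :=
  div_pos (mul_pos hq0 (Real.exp_pos t)) (sgpo_den_pos hq0 hq1)

lemma sgpoG_lt_one {t q : ℝ} (hq0 : 0 < q) (hq1 : q < 1) : sgpoG t q < 1 := by
  have hd := sgpo_den_pos (t := t) hq0 hq1
  rw [sgpoG, div_lt_one hd]
  linarith

lemma sgpoG_mono_t {t s q : ℝ} (hq0 : 0 < q) (hq1 : q < 1) (hts : t < s) :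
    sgpoG t q < sgpoG s q := by
  have hd1 := sgpo_den_pos (t := t) hq0 hq1
  have hd2 := sgpo_den_pos (t := s) hq0 hq1
  have hexp : Real.exp t < Real.exp s := Real.exp_lt_exp.2 hts
  rw [sgpoG, sgpoG, div_lt_div_iff₀ hd1 hd2]
  nlinarith [mul_pos hq0 (Real.exp_pos t), mul_pos hq0 (Real.exp_pos s),
    mul_pos (mul_pos hq0 (sub_pos.2 hq1)) (sub_pos.2 hexp)]

/-- the auxiliary function ψ -/
noncomputable def sgpoPsi (x : ℝ) : ℝ := Real.log x - Real.log (1 - x) + x * (1 - x)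

lemma sgpoPsi_hasDeriv {x : ℝ} (hx : x ∈ Set.Ioo (0:ℝ) 1) :
    HasDerivAt sgpoPsi (x⁻¹ + (1 - x)⁻¹ + (1 - 2 * x)) x := by
  obtain ⟨hx0, hx1⟩ := hx
  have h1 : HasDerivAt Real.log x⁻¹ x := Real.hasDerivAt_log (ne_of_gt hx0)
  have hsub : HasDerivAt (fun y : ℝ => 1 - y) (-1) x := (hasDerivAt_id x).const_sub 1
  have h2 : HasDerivAt (fun y : ℝ => Real.log (1 - y)) ((1 - x)⁻¹ * (-1)) x :=
    (Real.hasDerivAt_log (by linarith : (1:ℝ) - x ≠ 0)).comp x hsub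
  have h3 : HasDerivAt (fun y : ℝ => y * (1 - y)) (1 * (1 - x) + x * (-1)) x :=
    (hasDerivAt_id x).mul hsub
  have : HasDerivAt sgpoPsi (x⁻¹ - (1 - x)⁻¹ * (-1) + (1 * (1 - x) + x * (-1))) x :=
    (h1.sub h2).add h3
  convert this using 1
  ring

lemma sgpoPsi_mono : StrictMonoOn sgpoPsi (Set.Ioo (0:ℝ) 1) := by
  apply strictMonoOn_of_deriv_pos (convex_Ioo 0 1)
  · exact fun x hx => ((sgpoPsi_hasDeriv hx).differentiableAt).continuousAt.continuousWithinAt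
  · intro x hx
    rw [interior_Ioo] at hx
    rw [(sgpoPsi_hasDeriv hx).deriv]
    obtain ⟨hx0, hx1⟩ := hx
    have h1 : (1:ℝ) < x⁻¹ := ((one_lt_inv₀ hx0).2 hx1)
    have h2 : (0:ℝ) < (1 - x)⁻¹ := inv_pos.2 (by linarith)
    linarith

lemma sgpoG_cross {p q : ℝ} (hq0 : 0 < q) (hqp : q ≤ p) (hp1 : p < 1) :
    sgpoG (q * (1 - q)) q ≤ sgpoG (p * (1 - p)) p := by
  have hp0 : 0 < p := lt_of_lt_of_le hq0 hqp
  have hq1 : q < 1 := lt_of_le_of_lt hqp hp1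
  have hpsi : sgpoPsi q ≤ sgpoPsi p := by
    rcases eq_or_lt_of_le hqp with h | h
    · rw [h]
    · exact le_of_lt (sgpoPsi_mono ⟨hq0, hq1⟩ ⟨hp0, hp1⟩ h)
  -- turn ψ q ≤ ψ p into q(1-p)e^{q(1-q)} ≤ p(1-q)e^{p(1-p)}
  have key : q * (1 - p) * Real.exp (q * (1 - q)) ≤ p * (1 - q) * Real.exp (p * (1 - p)) := by
    have h1 : Real.log (q * (1 - p)) + q * (1 - q) ≤ Real.log (p * (1 - q)) + p * (1 - p) := by
      rw [Real.log_mul (ne_of_gt hq0) (by linarith : (1:ℝ) - p ≠ 0),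
        Real.log_mul (ne_of_gt hp0) (by linarith : (1:ℝ) - q ≠ 0)]
      have := hpsi
      unfold sgpoPsi at this
      linarith
    have h2 := Real.exp_le_exp.2 h1
    rw [Real.exp_add, Real.exp_add,
      Real.exp_log (mul_pos hq0 (by linarith : (0:ℝ) < 1 - p)),
      Real.exp_log (mul_pos hp0 (by linarith : (0:ℝ) < 1 - q))] at h2
    exact h2
  have hd1 := sgpo_den_pos (t := q * (1 - q)) hq0 hq1
  have hd2 := sgpo_den_pos (t := p * (1 - p)) hp0 hp1
  rw [sgpoG, sgpoG, div_le_div_iff₀ hd1 hd2]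
  nlinarith [mul_pos (mul_pos hq0 (Real.exp_pos (q * (1 - q))))
      (mul_pos hp0 (Real.exp_pos (p * (1 - p)))),
    Real.exp_pos (q * (1 - q)), Real.exp_pos (p * (1 - p))]

lemma sgpo_step {p q : ℝ} (hq0 : 0 < q) (hqp : q ≤ p) (hp1 : p < 1) :
    Real.exp (f12 p q) < Real.exp (f11 p) := by
  have hp0 : 0 < p := lt_of_lt_of_le hq0 hqp
  have hq1 : q < 1 := lt_of_le_of_lt hqp hp1
  rw [exp_f12_eq hq0 hq1, exp_f11_eq hp0 hp1]
  have h1 : sgpoG (p ^ 2 * q * (1 - q)) q < sgpoG (q * (1 - q)) q := by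
    apply sgpoG_mono_t hq0 hq1
    have hp2 : p ^ 2 < 1 := by nlinarith
    nlinarith [mul_pos hq0 (by linarith : (0:ℝ) < 1 - q)]
  exact lt_of_lt_of_le h1 (sgpoG_cross hq0 hqp hp1)

theorem sgpo_p_gt_q (pS qS : ℕ → ℝ)
    (hpS0 : pS 0 = 1 / 2) (hqS0 : qS 0 = 1 / 2)
    (hpS : ∀ k, pS (k + 1) = Real.exp (f11 (pS k)))
    (hqS : ∀ k, qS (k + 1) = Real.exp (f12 (pS k) (qS k))) :
    ∀ k : ℕ, 1 ≤ k → pS k > qS k := by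
  have inv : ∀ k, 0 < qS k ∧ qS k ≤ pS k ∧ pS k < 1 := by
    intro k
    induction k with
    | zero => rw [hpS0, hqS0]; norm_num
    | succ n ih =>
      obtain ⟨hq0, hqp, hp1⟩ := ih
      have hp0 : 0 < pS n := lt_of_lt_of_le hq0 hqp
      have hq1 : qS n < 1 := lt_of_le_of_lt hqp hp1
      refine ⟨?_, ?_, ?_⟩
      · rw [hqS n]; exact Real.exp_pos _
      · rw [hqS n, hpS n]; exact le_of_lt (sgpo_step hq0 hqp hp1)
      · rw [hpS n, exp_f11_eq hp0 hp1]; exact sgpoG_lt_one hp0 hp1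
  intro k hk
  obtain ⟨j, rfl⟩ : ∃ j, k = j + 1 := ⟨k - 1, by omega⟩
  rw [hpS j, hqS j]
  obtain ⟨hq0, hqp, hp1⟩ := inv j
  exact sgpo_step hq0 hqp hp1
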